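/- Let G be a strongly connected digraph with n ≥ 4 vertices and m arcs, and let α ∈ [1/2, 1). Then the A_α spectral radius satisfies λ_α(G) ≤ max{α·Δ⁺(G), (1−α)(m−n+1)/2} + 2α. -/

import Mathlib

open Matrix Finset ENNReal

/-- The outdegree of a vertex in a digraph given by its arc relation. -/
def outDeg {V : Type*} [Fintype V] (E : V → V → Prop) [DecidableRel E] (u : V) : ℕ :=
  (Finset.univ.filter (fun v => E u v)).card

/-- The maximum outdegree. -/
def maxOutDeg {V : Type*} [Fintype V] (E : V → V → Prop) [DecidableRel E] : ℕ :=
  Finset.univ.sup (outDeg E)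

/-- A simple digraph has no loops. -/
def IsSimpleDigraph {V : Type*} (E : V → V → Prop) : Prop := ∀ v, ¬ E v v

/-- Strong connectivity: every vertex reaches every other by a directed walk. -/
def StronglyConnected {V : Type*} (E : V → V → Prop) : Prop :=
  ∀ u v, Relation.ReflTransGen E u v

/-- The A_α matrix  α D + (1-α) A  of a digraph, over ℂ. -/
noncomputable def Aalpha {V : Type*} [Fintype V] [DecidableEq V] (α : ℝ)
    (E : V → V → Prop) [DecidableRel E] : Matrix V V ℂ :=
  (α : ℂ) • Matrix.diagonal (fun u => (outDeg E u : ℂ)) +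
    ((1 - α : ℝ) : ℂ) • Matrix.of (fun u v => if E u v then (1 : ℂ) else 0)

/-- The A_α spectral radius of a digraph. -/
noncomputable def lambdaAlpha {V : Type*} [Fintype V] [DecidableEq V] (α : ℝ)
    (E : V → V → Prop) [DecidableRel E] : ℝ≥0∞ :=
  spectralRadius ℂ (Aalpha α E)

/-- The signless Laplacian matrix D + A of a digraph, over ℂ. -/
noncomputable def signlessLaplacian {V : Type*} [Fintype V] [DecidableEq V]
    (E : V → V → Prop) [DecidableRel E] : Matrix V V ℂ :=
  Matrix.diagonal (fun u => (outDeg E u : ℂ)) +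
    Matrix.of (fun u v => if E u v then (1 : ℂ) else 0)

/-- The signless Laplacian spectral radius of a digraph. -/
noncomputable def qSpec {V : Type*} [Fintype V] [DecidableEq V]
    (E : V → V → Prop) [DecidableRel E] : ℝ≥0∞ :=
  spectralRadius ℂ (signlessLaplacian E)

/-- Key scalar inequality behind the spectral bound. -/
lemma key_arith {a d S D K t : ℝ} (hα : 1/2 ≤ a) (hα1 : a < 1) (hd : 1 ≤ d)
    (hdD : d ≤ D) (hS0 : 0 ≤ S) (hSK : S ≤ K) (hSd : S ≤ d * D)
    (ht : t * d ≤ a * d * d + (1 - a) * S) :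
    t ≤ max (a * D) ((1 - a) * K / 2) + 2 * a := by
  have hd0 : (0:ℝ) < d := by linarith
  have ha0 : (0:ℝ) < a := by linarith
  have ha1 : (0:ℝ) ≤ 1 - a := by linarith
  have hK0 : (0:ℝ) ≤ K := le_trans hS0 hSK
  have hD0 : (0:ℝ) ≤ D := by linarith
  suffices h2 : a * d * d + (1 - a) * S ≤ (max (a * D) ((1 - a) * K / 2) + 2 * a) * d by
    exact le_of_mul_le_mul_right (ht.trans h2) hd0
  rcases le_total ((1 - a) * K / 2) (a * D) with h | h
  · rw [max_eq_left h]
    rcases le_total d 2 with hd2 | hd2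
    · nlinarith [mul_nonneg (mul_nonneg hd0.le ha0.le) (by linarith : (0:ℝ) ≤ 2 - d),
        mul_nonneg hd0.le (mul_nonneg (by linarith : (0:ℝ) ≤ 2*a - 1) hD0),
        mul_nonneg ha1 (by linarith : (0:ℝ) ≤ d*D - S)]
    · nlinarith [mul_nonneg ha1 (by linarith : (0:ℝ) ≤ K - S),
        mul_nonneg (mul_nonneg ha0.le (by linarith : (0:ℝ) ≤ D - d))
          (by linarith : (0:ℝ) ≤ d - 2)]
  · rw [max_eq_right h]
    have had : a * d ≤ a * D := by nlinarith
    rcases le_total d 2 with hd2 | hd2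
    · have hK2 : 2 * D ≤ K := by nlinarith
      nlinarith [mul_nonneg (mul_nonneg hd0.le ha1) (by linarith : (0:ℝ) ≤ K - 2*D),
        mul_nonneg (mul_nonneg hd0.le ha0.le) (by linarith : (0:ℝ) ≤ 2 - d),
        mul_nonneg ha1 (by linarith : (0:ℝ) ≤ d*D - S)]
    · nlinarith [mul_nonneg ha1 (by linarith : (0:ℝ) ≤ K - S),
        mul_nonneg (by linarith : (0:ℝ) ≤ d - 2) (by linarith : (0:ℝ) ≤ (1-a)*K/2 - a*d)]

/-- In a strongly connected digraph on at least two vertices every outdegree is positive. -/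
lemma outDeg_pos {V : Type*} [Fintype V] (E : V → V → Prop) [DecidableRel E]
    (hsc : StronglyConnected E) (hcard : 2 ≤ Fintype.card V) (v : V) :
    1 ≤ outDeg E v := by
  obtain ⟨w, hw⟩ := Fintype.exists_ne_of_one_lt_card (by omega) v
  rcases (hsc v w).cases_head with h | ⟨c, hc, -⟩
  · exact absurd h.symm hw
  · exact Finset.card_pos.mpr ⟨c, Finset.mem_filter.mpr ⟨Finset.mem_univ c, hc⟩⟩

/-- The sum of outdegrees over an out-neighbourhood is at most `m - (n-1)`. -/
lemma nbr_sum_bound {V : Type*} [Fintype V] [DecidableEq V] (E : V → V → Prop)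
    [DecidableRel E] (hsimple : IsSimpleDigraph E) (hsc : StronglyConnected E)
    (hcard : 2 ≤ Fintype.card V) (v : V) :
    (∑ u ∈ Finset.univ.filter (fun u => E v u), outDeg E u) + (Fintype.card V - 1)
      ≤ ∑ u, outDeg E u := by
  classical
  set N := Finset.univ.filter (fun u => E v u) with hN
  set Nc := Finset.univ.filter (fun u => ¬ E v u) with hNc
  have hsplit : (∑ u ∈ N, outDeg E u) + (∑ u ∈ Nc, outDeg E u) = ∑ u, outDeg E u :=
    Finset.sum_filter_add_sum_filter_not _ _ _
  have hvNc : v ∈ Nc := Finset.mem_filter.mpr ⟨Finset.mem_univ v, hsimple v⟩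
  have hcards : N.card + Nc.card = Fintype.card V := by
    simpa using Finset.card_filter_add_card_filter_not (s := Finset.univ)
      (p := fun u => E v u)
  have herase : outDeg E v + ∑ u ∈ Nc.erase v, outDeg E u = ∑ u ∈ Nc, outDeg E u :=
    Finset.add_sum_erase _ _ hvNc
  have hlow : (Nc.erase v).card ≤ ∑ u ∈ Nc.erase v, outDeg E u := by
    calc (Nc.erase v).card = (Nc.erase v).card • 1 := by simp
    _ ≤ _ := Finset.card_nsmul_le_sum _ _ _ (fun u _ => outDeg_pos E hsc hcard u)
  have hNcard : N.card = outDeg E v := rfl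
  have hce : (Nc.erase v).card = Nc.card - 1 := Finset.card_erase_of_mem hvNc
  have h1 : 1 ≤ Nc.card := Finset.card_pos.mpr ⟨v, hvNc⟩
  omega

lemma deg_le_max {V : Type*} [Fintype V] (E : V → V → Prop) [DecidableRel E] (v : V) :
    outDeg E v ≤ maxOutDeg E := Finset.le_sup (Finset.mem_univ v)

/-- Norm of an entry of the `A_α` matrix. -/
lemma aalpha_entry_norm {V : Type*} [Fintype V] [DecidableEq V] {E : V → V → Prop}
    [DecidableRel E] {α : ℝ} (hα0 : 0 ≤ α) (hα1 : α ≤ 1)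
    (hsimple : IsSimpleDigraph E) (v u : V) :
    ‖Aalpha α E v u‖ =
      (if v = u then α * (outDeg E v : ℝ) else 0) + (if E v u then (1 - α) else 0) := by
  simp only [Aalpha, Matrix.add_apply, Matrix.smul_apply, Matrix.diagonal_apply,
    Matrix.of_apply, smul_eq_mul]
  by_cases huv : v = u
  · subst huv
    rw [if_pos rfl, if_pos rfl, if_neg (hsimple v), if_neg (hsimple v)]
    have : (α : ℂ) * (outDeg E v : ℕ) + ((1 - α : ℝ) : ℂ) * 0
        = ((α * (outDeg E v : ℕ) : ℝ) : ℂ) := by push_cast; ring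
    rw [this, Complex.norm_real, Real.norm_eq_abs,
      abs_of_nonneg (by positivity), add_zero]
  · rw [if_neg huv, if_neg huv]
    by_cases hE : E v u
    · rw [if_pos hE, if_pos hE]
      have : (α : ℂ) * 0 + ((1 - α : ℝ) : ℂ) * 1 = (((1 - α : ℝ)) : ℂ) := by ring
      rw [this, Complex.norm_real, Real.norm_eq_abs, abs_of_nonneg (by linarith), zero_add]
    · simp [hE]

/-- Every spectral point of `A_α` satisfies a weighted row-sum bound at some vertex. -/
lemma eig_row_bound {V : Type*} [Fintype V] [DecidableEq V] {E : V → V → Prop}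
    [DecidableRel E] {α : ℝ} (hα0 : 0 ≤ α) (hα1 : α ≤ 1)
    (hsimple : IsSimpleDigraph E) (hdeg : ∀ u, 1 ≤ outDeg E u)
    {k : ℂ} (hk : k ∈ spectrum ℂ (Aalpha α E)) :
    ∃ v : V, ‖k‖ * (outDeg E v : ℝ) ≤
      α * (outDeg E v : ℝ) * (outDeg E v : ℝ) +
        (1 - α) * ∑ u ∈ Finset.univ.filter (fun u => E v u), (outDeg E u : ℝ) := by
  classical
  have hdet : (algebraMap ℂ (Matrix V V ℂ) k - Aalpha α E).det = 0 := by
    by_contra h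
    exact (spectrum.mem_iff.mp hk) ((Matrix.isUnit_iff_isUnit_det _).mpr (Ne.isUnit h))
  obtain ⟨x, hx0, hxe⟩ := (Matrix.exists_mulVec_eq_zero_iff).mpr hdet
  have hV : Nonempty V := ⟨Classical.choice (by
    rcases Function.ne_iff.mp hx0 with ⟨u, -⟩; exact ⟨u⟩)⟩
  have heig : (Aalpha α E) *ᵥ x = k • x := by
    rw [sub_mulVec, Algebra.algebraMap_eq_smul_one, smul_mulVec, one_mulVec,
      sub_eq_zero] at hxe
    exact hxe.symm
  have hd0 : ∀ u : V, (0:ℝ) < (outDeg E u : ℝ) := fun u => by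
    exact_mod_cast Nat.lt_of_lt_of_le Nat.zero_lt_one (hdeg u)
  obtain ⟨v, -, hvmax⟩ := Finset.exists_max_image Finset.univ
    (fun u => ‖x u‖ / (outDeg E u : ℝ)) Finset.univ_nonempty
  set W : ℝ := ‖x v‖ / (outDeg E v : ℝ) with hW
  have hWb : ∀ u, ‖x u‖ ≤ W * (outDeg E u : ℝ) := fun u => by
    have := hvmax u (Finset.mem_univ u)
    exact (div_le_iff₀ (hd0 u)).mp this
  have hWpos : 0 < W := by
    obtain ⟨u, hu⟩ := Function.ne_iff.mp hx0
    calc (0:ℝ) < ‖x u‖ / (outDeg E u : ℝ) := div_pos (norm_pos_iff.mpr hu) (hd0 u)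
    _ ≤ W := hvmax u (Finset.mem_univ u)
  refine ⟨v, ?_⟩
  have hxv : ‖x v‖ = W * (outDeg E v : ℝ) := by
    rw [hW, div_mul_cancel₀ _ (hd0 v).ne']
  have hrow : k * x v = ∑ u, Aalpha α E v u * x u := by
    have := congrFun heig v
    simpa [Matrix.mulVec, dotProduct] using this.symm
  have h1 : ‖k‖ * ‖x v‖ ≤ ∑ u, ‖Aalpha α E v u‖ * ‖x u‖ := by
    calc ‖k‖ * ‖x v‖ = ‖k * x v‖ := (norm_mul _ _).symm
    _ = ‖∑ u, Aalpha α E v u * x u‖ := by rw [hrow]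
    _ ≤ ∑ u, ‖Aalpha α E v u * x u‖ := norm_sum_le _ _
    _ = ∑ u, ‖Aalpha α E v u‖ * ‖x u‖ := by simp [norm_mul]
  have h2 : ∑ u, ‖Aalpha α E v u‖ * ‖x u‖ ≤ W * ∑ u, ‖Aalpha α E v u‖ * (outDeg E u : ℝ) := by
    rw [Finset.mul_sum]
    refine Finset.sum_le_sum fun u _ => ?_
    have := mul_le_mul_of_nonneg_left (hWb u) (norm_nonneg (Aalpha α E v u))
    calc ‖Aalpha α E v u‖ * ‖x u‖ ≤ ‖Aalpha α E v u‖ * (W * (outDeg E u : ℝ)) := this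
    _ = W * (‖Aalpha α E v u‖ * (outDeg E u : ℝ)) := by ring
  have h3 : ∑ u, ‖Aalpha α E v u‖ * (outDeg E u : ℝ)
      = α * (outDeg E v : ℝ) * (outDeg E v : ℝ) +
        (1 - α) * ∑ u ∈ Finset.univ.filter (fun u => E v u), (outDeg E u : ℝ) := by
    have : ∀ u, ‖Aalpha α E v u‖ * (outDeg E u : ℝ)
        = (if v = u then α * (outDeg E v : ℝ) * (outDeg E u : ℝ) else 0)
          + (if E v u then (1 - α) * (outDeg E u : ℝ) else 0) := by
      intro u
      rw [aalpha_entry_norm hα0 hα1 hsimple v u]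
      by_cases huv : v = u
      · subst huv
        simp [hsimple v]
      · by_cases hE : E v u <;> simp [huv, hE] <;> ring
    rw [Finset.sum_congr rfl (fun u _ => this u), Finset.sum_add_distrib]
    congr 1
    · rw [Finset.sum_ite_eq Finset.univ v
        (fun u => α * (outDeg E v : ℝ) * (outDeg E u : ℝ))]
      simp
    · rw [← Finset.sum_filter, Finset.mul_sum]
  have hfin : ‖k‖ * (W * (outDeg E v : ℝ)) ≤ W * (α * (outDeg E v : ℝ) * (outDeg E v : ℝ) +
      (1 - α) * ∑ u ∈ Finset.univ.filter (fun u => E v u), (outDeg E u : ℝ)) := by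
    rw [← hxv, ← h3]
    exact h1.trans h2
  refine le_of_mul_le_mul_left ?_ hWpos
  calc W * (‖k‖ * (outDeg E v : ℝ)) = ‖k‖ * (W * (outDeg E v : ℝ)) := by ring
  _ ≤ _ := hfin

theorem stmt_0 {V : Type*} [Fintype V] [DecidableEq V]
    (E : V → V → Prop) [DecidableRel E]
    (hsimple : IsSimpleDigraph E) (hsc : StronglyConnected E)
    (n m : ℕ) (hn : n = Fintype.card V) (hn4 : 4 ≤ n)
    (hm : m = ∑ v, outDeg E v)
    (α : ℝ) (hα : 1/2 ≤ α) (hα1 : α < 1) :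
    lambdaAlpha α E ≤
      ENNReal.ofReal
        (max (α * (maxOutDeg E : ℝ)) ((1 - α) * ((m : ℝ) - n + 1) / 2) + 2 * α) := by
  classical
  have hcard : 2 ≤ Fintype.card V := by omega
  have hdeg : ∀ u, 1 ≤ outDeg E u := outDeg_pos E hsc hcard
  rw [lambdaAlpha, spectralRadius]
  refine iSup₂_le fun k hk => ?_
  rw [show ((‖k‖₊ : NNReal) : ℝ≥0∞) = ENNReal.ofReal ‖k‖ by
    rw [← coe_nnnorm, ENNReal.ofReal_coe_nnreal]]
  refine ENNReal.ofReal_le_ofReal ?_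
  obtain ⟨v, hv⟩ := eig_row_bound (by linarith) hα1.le hsimple hdeg hk
  set Sv : ℝ := ∑ u ∈ Finset.univ.filter (fun u => E v u), (outDeg E u : ℝ) with hSv
  have hd1 : (1:ℝ) ≤ (outDeg E v : ℝ) := by exact_mod_cast hdeg v
  have hdD : (outDeg E v : ℝ) ≤ (maxOutDeg E : ℝ) := by exact_mod_cast deg_le_max E v
  have hS0 : 0 ≤ Sv := Finset.sum_nonneg fun u _ => by positivity
  have hScast : Sv = ((∑ u ∈ Finset.univ.filter (fun u => E v u), outDeg E u : ℕ) : ℝ) := by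
    rw [hSv]; push_cast; ring
  have hSK : Sv ≤ (m : ℝ) - n + 1 := by
    have h := nbr_sum_bound E hsimple hsc hcard v
    rw [← hn, ← hm] at h
    have h2 : (∑ u ∈ Finset.univ.filter (fun u => E v u), outDeg E u) + n ≤ m + 1 := by omega
    rw [hScast]
    have h3 : ((∑ u ∈ Finset.univ.filter (fun u => E v u), outDeg E u : ℕ) : ℝ) + (n : ℝ)
        ≤ (m : ℝ) + 1 := by exact_mod_cast h2
    linarith
  have hSd : Sv ≤ (outDeg E v : ℝ) * (maxOutDeg E : ℝ) := by
    rw [hSv]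
    calc ∑ u ∈ Finset.univ.filter (fun u => E v u), (outDeg E u : ℝ)
        ≤ (Finset.univ.filter (fun u => E v u)).card • (maxOutDeg E : ℝ) :=
          Finset.sum_le_card_nsmul _ _ _ (fun u _ => by exact_mod_cast deg_le_max E u)
    _ = (outDeg E v : ℝ) * (maxOutDeg E : ℝ) := by
          rw [nsmul_eq_mul]; rfl
  exact key_arith hα hα1 hd1 hdD hS0 hSK hSd hv
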